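/- arXiv:2211.17005 — 3 statements merged into one kernel-verified Lean document; each statement's English description precedes it below -/
import Mathlib

section
/- Let φ(X,Y) be integrable and non-degenerate, with M(z,y) = E[exp(zφ(X,Y))|Y=y] well defined for all z, y. Define Λ(t) = log E[M(t/N, Y)^N]. Then Λ is strictly convex, Λ'(0) = E[φ(X,Y)], and Λ''(0) = (1/N)E[Var(φ(X,Y)|Y)] + Var(E[φ(X,Y)|Y]). -/
set_option maxHeartbeats 2000000


open MeasureTheory ProbabilityTheory Real Metric

lemma exp_le_add_exp {u z a b : ℝ} (ha : a ≤ z) (hb : z ≤ b) :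
    Real.exp (z * u) ≤ Real.exp (a * u) + Real.exp (b * u) := by
  rcases le_total u 0 with hu | hu
  · have : z * u ≤ a * u := mul_le_mul_of_nonpos_right ha hu
    exact le_add_of_le_of_nonneg (Real.exp_le_exp.2 this) (Real.exp_pos _).le
  · have : z * u ≤ b * u := mul_le_mul_of_nonneg_right hb hu
    exact le_add_of_nonneg_of_le (Real.exp_pos _).le (Real.exp_le_exp.2 this)

lemma abs_le_exp_add (u : ℝ) : |u| ≤ Real.exp u + Real.exp (-u) := by
  rcases le_total 0 u with hu | hu
  · rw [abs_of_nonneg hu]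
    calc u ≤ u + 1 := by linarith
    _ ≤ Real.exp u := Real.add_one_le_exp u
    _ ≤ _ := le_add_of_nonneg_right (Real.exp_pos _).le
  · rw [abs_of_nonpos hu]
    calc -u ≤ -u + 1 := by linarith
    _ ≤ Real.exp (-u) := Real.add_one_le_exp (-u)
    _ ≤ _ := le_add_of_nonneg_left (Real.exp_pos _).le

lemma abs_mul_exp_le {u z a b : ℝ} (ha : a ≤ z - 2) (hb : z + 2 ≤ b) :
    |u * Real.exp (z * u)| ≤ 2 * (Real.exp (a * u) + Real.exp (b * u)) := by
  rw [abs_mul, abs_of_nonneg (Real.exp_pos _).le]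
  calc |u| * Real.exp (z * u) ≤ (Real.exp u + Real.exp (-u)) * Real.exp (z * u) :=
        mul_le_mul_of_nonneg_right (abs_le_exp_add u) (Real.exp_pos _).le
    _ = Real.exp ((z+1) * u) + Real.exp ((z-1) * u) := by
        rw [add_mul, ← Real.exp_add, ← Real.exp_add]; ring_nf
    _ ≤ (Real.exp (a*u) + Real.exp (b*u)) + (Real.exp (a*u) + Real.exp (b*u)) := by
        gcongr <;> [exact exp_le_add_exp (by linarith) (by linarith);
          exact exp_le_add_exp (by linarith) (by linarith)]
    _ = 2 * (Real.exp (a * u) + Real.exp (b * u)) := by ring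

lemma sq_mul_exp_le {u z a b : ℝ} (ha : a ≤ z - 2) (hb : z + 2 ≤ b) :
    |u ^ 2 * Real.exp (z * u)| ≤ 4 * (Real.exp (a * u) + Real.exp (b * u)) := by
  rw [abs_mul, abs_of_nonneg (Real.exp_pos _).le]
  have h1 : |u| ^ 2 * Real.exp (z * u) ≤ (Real.exp u + Real.exp (-u))^2 * Real.exp (z*u) :=
    mul_le_mul_of_nonneg_right (pow_le_pow_left₀ (abs_nonneg u) (abs_le_exp_add u) 2)
      (Real.exp_pos _).le
  calc |u ^ 2| * Real.exp (z * u) = |u| ^ 2 * Real.exp (z * u) := by rw [abs_pow, ← sq_abs, abs_abs]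
    _ ≤ (Real.exp u + Real.exp (-u))^2 * Real.exp (z*u) := h1
    _ = Real.exp ((z+2)*u) + 2 * Real.exp (z*u) + Real.exp ((z-2)*u) := by
        rw [show (z+2)*u = u + u + z*u by ring, show (z-2)*u = -u + -u + z*u by ring,
          Real.exp_add, Real.exp_add, Real.exp_add, Real.exp_add]
        have h0 : Real.exp u * Real.exp (-u) = 1 := by rw [← Real.exp_add]; simp
        linear_combination 2 * Real.exp (z * u) * h0
    _ ≤ (Real.exp (a*u) + Real.exp (b*u)) + 2*(Real.exp (a*u) + Real.exp (b*u))
         + (Real.exp (a*u) + Real.exp (b*u)) := by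
        gcongr ?_ + 2*?_ + ?_
        · exact exp_le_add_exp (by linarith) (by linarith)
        · exact exp_le_add_exp (by linarith) (by linarith)
        · exact exp_le_add_exp (by linarith) (by linarith)
    _ = 4 * (Real.exp (a * u) + Real.exp (b * u)) := by ring

lemma mgf_deriv_aux {Ω : Type*} [MeasurableSpace Ω] (μ : Measure Ω) [IsFiniteMeasure μ]
    {f : Ω → ℝ} (hf : Measurable f)
    (hint : ∀ z : ℝ, Integrable (fun ω => Real.exp (z * f ω)) μ) (z : ℝ) :
    Integrable (fun ω => f ω * Real.exp (z * f ω)) μ ∧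
    Integrable (fun ω => f ω ^ 2 * Real.exp (z * f ω)) μ ∧
    HasDerivAt (fun t => ∫ ω, Real.exp (t * f ω) ∂μ) (∫ ω, f ω * Real.exp (z * f ω) ∂μ) z ∧
    HasDerivAt (fun t => ∫ ω, f ω * Real.exp (t * f ω) ∂μ)
      (∫ ω, f ω ^ 2 * Real.exp (z * f ω) ∂μ) z := by
  set bd : Ω → ℝ := fun ω => 4 * (Real.exp ((z - 3) * f ω) + Real.exp ((z + 3) * f ω)) with hbd
  have hbd_int : Integrable bd μ := (((hint (z - 3)).add (hint (z + 3))).const_mul 4)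
  have hball : ∀ t ∈ ball z 1, z - 3 ≤ t - 2 ∧ t + 2 ≤ z + 3 := by
    intro t ht
    rw [mem_ball, dist_comm, Real.dist_eq, abs_lt] at ht
    constructor <;> linarith [ht.1, ht.2]
  have hd1 : ∀ (u : Ω) (t : ℝ), HasDerivAt (fun s => Real.exp (s * f u))
      (f u * Real.exp (t * f u)) t := by
    intro u t
    have h := (hasDerivAt_mul_const (f u) (x := t)).exp
    simpa [mul_comm] using h
  have H1 := hasDerivAt_integral_of_dominated_loc_of_deriv_le (F := fun t ω => Real.exp (t * f ω))
      (F' := fun t ω => f ω * Real.exp (t * f ω)) (μ := μ) (x₀ := z) (bound := bd) (ball_mem_nhds z one_pos)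
      (Filter.Eventually.of_forall fun t => ((hf.const_mul t).exp).aestronglyMeasurable)
      (hint z) ((hf.mul (hf.const_mul z).exp).aestronglyMeasurable)
      (Filter.Eventually.of_forall fun ω => by
        intro t ht
        have := abs_mul_exp_le (u := f ω) (hball t ht).1 (hball t ht).2
        calc ‖f ω * Real.exp (t * f ω)‖ = |f ω * Real.exp (t * f ω)| := rfl
          _ ≤ 2 * (Real.exp ((z-3) * f ω) + Real.exp ((z+3) * f ω)) := this
          _ ≤ bd ω := by
              show _ ≤ 4 * (Real.exp ((z - 3) * f ω) + Real.exp ((z + 3) * f ω))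
              have := Real.exp_pos ((z-3) * f ω)
              have := Real.exp_pos ((z+3) * f ω)
              nlinarith)
      hbd_int
      (Filter.Eventually.of_forall fun ω t _ => hd1 ω t)
  obtain ⟨hint1, hderiv1⟩ := H1
  have hd2 : ∀ (u : Ω) (t : ℝ), HasDerivAt (fun s => f u * Real.exp (s * f u))
      (f u ^ 2 * Real.exp (t * f u)) t := by
    intro u t
    have h := (hd1 u t).const_mul (f u)
    rw [pow_two, mul_assoc]
    exact h
  have H2 := hasDerivAt_integral_of_dominated_loc_of_deriv_le
      (F := fun t ω => f ω * Real.exp (t * f ω))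
      (F' := fun t ω => f ω ^ 2 * Real.exp (t * f ω)) (μ := μ) (x₀ := z) (bound := bd) (ball_mem_nhds z one_pos)
      (Filter.Eventually.of_forall fun t =>
        (hf.mul (hf.const_mul t).exp).aestronglyMeasurable)
      hint1 (((hf.pow_const 2).mul (hf.const_mul z).exp).aestronglyMeasurable)
      (Filter.Eventually.of_forall fun ω => by
        intro t ht
        have := sq_mul_exp_le (u := f ω) (hball t ht).1 (hball t ht).2
        calc ‖f ω ^ 2 * Real.exp (t * f ω)‖ = |f ω ^ 2 * Real.exp (t * f ω)| := rfl
          _ ≤ 4 * (Real.exp ((z-3) * f ω) + Real.exp ((z+3) * f ω)) := this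
          _ ≤ bd ω := le_refl _)
      hbd_int
      (Filter.Eventually.of_forall fun ω t _ => hd2 ω t)
  exact ⟨hint1, H2.1, hderiv1, H2.2⟩


lemma pow_add_le_aux {p q : ℝ} (hp : 0 ≤ p) (hq : 0 ≤ q) (N : ℕ) :
    (p + q) ^ N ≤ 2 ^ N * (p ^ N + q ^ N) := by
  have h1 : p + q ≤ 2 * max p q := by
    rcases le_total p q with h | h
    · rw [max_eq_right h]; linarith
    · rw [max_eq_left h]; linarith
  calc (p + q) ^ N ≤ (2 * max p q) ^ N :=
        pow_le_pow_left₀ (by positivity) h1 N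
    _ = 2 ^ N * (max p q) ^ N := mul_pow 2 _ N
    _ ≤ 2 ^ N * (p ^ N + q ^ N) := by
        gcongr
        rcases le_total p q with h | h
        · rw [max_eq_right h]; exact le_add_of_nonneg_left (by positivity)
        · rw [max_eq_left h]; exact le_add_of_nonneg_right (by positivity)



/-- with `Λ(t) = log E[M(t/N,Y)^N]`, `M(z,y) = E[exp(zφ(X,Y))|Y=y]`
(expressed through the conditional law `κ y` of `X` given `Y = y`), if `φ(X,Y)` is
integrable and non-degenerate and all the needed exponential moments are finite,
then `Λ` is strictly convex, `Λ'(0) = E[φ(X,Y)]` and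
`Λ''(0) = (1/N)E[Var(φ(X,Y)|Y)] + Var(E[φ(X,Y)|Y])`. -/
theorem lambda_strictly_convex_and_derivs
    {𝒴 𝒳 : Type*} [MeasurableSpace 𝒴] [MeasurableSpace 𝒳]
    (ν : Measure 𝒴) [IsProbabilityMeasure ν] (κ : Kernel 𝒴 𝒳) [IsMarkovKernel κ]
    (N : ℕ) (hN : 1 ≤ N)
    (φ : 𝒴 → 𝒳 → ℝ) (hφ : Measurable (Function.uncurry φ))
    (hφint : Integrable (fun p => φ p.1 p.2) (ν ⊗ₘ κ))
    (hnondeg : ¬ ∃ c : ℝ, (fun p : 𝒴 × 𝒳 => φ p.1 p.2) =ᵐ[ν ⊗ₘ κ] fun _ => c)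
    -- exponential moments are everywhere finite
    (hmgf : ∀ z : ℝ, ∀ y : 𝒴, Integrable (fun x => Real.exp (z * φ y x)) (κ y))
    (hmgf' : ∀ z : ℝ, Integrable (fun y => (∫ x, Real.exp (z * φ y x) ∂(κ y)) ^ N) ν)
    (hmom : ∀ z : ℝ, Integrable (fun p => (φ p.1 p.2) ^ 2 * Real.exp (z * φ p.1 p.2)) (ν ⊗ₘ κ))
    (Λ : ℝ → ℝ)
    (hΛ : ∀ t : ℝ, Λ t = Real.log (∫ y, (∫ x, Real.exp ((t / N) * φ y x) ∂(κ y)) ^ N ∂ν)) :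
    StrictConvexOn ℝ Set.univ Λ ∧
    deriv Λ 0 = ∫ p, φ p.1 p.2 ∂(ν ⊗ₘ κ) ∧
    deriv (deriv Λ) 0
      = (1 / N : ℝ) * (∫ y, ((∫ x, (φ y x) ^ 2 ∂(κ y)) - (∫ x, φ y x ∂(κ y)) ^ 2) ∂ν)
        + ((∫ y, (∫ x, φ y x ∂(κ y)) ^ 2 ∂ν) - (∫ y, ∫ x, φ y x ∂(κ y) ∂ν) ^ 2) := by

  have hNpos : 0 < N := hN
  have hNR : (0 : ℝ) < (N : ℝ) := by exact_mod_cast hNpos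
  have hN0 : (N : ℝ) ≠ 0 := hNR.ne'
  have hφy : ∀ y, Measurable (φ y) := fun y => hφ.of_uncurry_left
  set M : ℝ → 𝒴 → ℝ := fun z y => ∫ x, Real.exp (z * φ y x) ∂(κ y) with hMdef
  set M1 : ℝ → 𝒴 → ℝ := fun z y => ∫ x, φ y x * Real.exp (z * φ y x) ∂(κ y) with hM1def
  set M2 : ℝ → 𝒴 → ℝ := fun z y => ∫ x, (φ y x) ^ 2 * Real.exp (z * φ y x) ∂(κ y) with hM2def
  have key : ∀ (z : ℝ) (y : 𝒴),
      Integrable (fun x => φ y x * Real.exp (z * φ y x)) (κ y) ∧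
      Integrable (fun x => φ y x ^ 2 * Real.exp (z * φ y x)) (κ y) ∧
      HasDerivAt (fun t => M t y) (M1 z y) z ∧
      HasDerivAt (fun t => M1 t y) (M2 z y) z :=
    fun z y => mgf_deriv_aux (κ y) (hφy y) (fun w => hmgf w y) z
  have hMpos : ∀ z y, 0 < M z y := by
    intro z y
    have := mgf_pos (X := φ y) (μ := κ y) (t := z) (hmgf z y)
    simpa [mgf] using this
  have hMmeas : ∀ z, Measurable (fun y => M z y) := by
    intro z
    exact (MeasureTheory.StronglyMeasurable.integral_kernel_prod_right (κ := κ)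
      (f := fun y x => Real.exp (z * φ y x))
      ((hφ.const_mul z).exp.stronglyMeasurable)).measurable
  have hM1meas : ∀ z, Measurable (fun y => M1 z y) := by
    intro z
    exact (MeasureTheory.StronglyMeasurable.integral_kernel_prod_right (κ := κ)
      (f := fun y x => φ y x * Real.exp (z * φ y x))
      ((hφ.mul (hφ.const_mul z).exp).stronglyMeasurable)).measurable
  have hM2meas : ∀ z, Measurable (fun y => M2 z y) := by
    intro z
    exact (MeasureTheory.StronglyMeasurable.integral_kernel_prod_right (κ := κ)
      (f := fun y x => φ y x ^ 2 * Real.exp (z * φ y x))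
      (by have h := ((hφ.pow_const 2).mul (hφ.const_mul z).exp).stronglyMeasurable; exact h)).measurable
  -- the three level-functions and their derivatives
  set H : ℝ → 𝒴 → ℝ := fun t y => M (t / N) y ^ N with hHdef
  set H1 : ℝ → 𝒴 → ℝ := fun t y => (N : ℝ) * M (t / N) y ^ (N - 1) * (M1 (t / N) y * (1 / N))
    with hH1def
  set H2 : ℝ → 𝒴 → ℝ := fun t y =>
      ((N - 1 : ℕ) : ℝ) * M (t / N) y ^ (N - 1 - 1) * (M1 (t / N) y * (1 / N)) * M1 (t / N) y
      + M (t / N) y ^ (N - 1) * (M2 (t / N) y * (1 / N)) with hH2def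
  have hdivd : ∀ t : ℝ, HasDerivAt (fun s : ℝ => s / (N : ℝ)) (1 / N) t := by
    intro t
    simpa using (hasDerivAt_id t).div_const (N : ℝ)
  have hMcomp : ∀ (t : ℝ) (y : 𝒴),
      HasDerivAt (fun s => M (s / N) y) (M1 (t / N) y * (1 / N)) t :=
    fun t y => by have h := ((key (t / N) y).2.2.1).comp t (hdivd t); exact h
  have hM1comp : ∀ (t : ℝ) (y : 𝒴),
      HasDerivAt (fun s => M1 (s / N) y) (M2 (t / N) y * (1 / N)) t :=
    fun t y => by have h := ((key (t / N) y).2.2.2).comp t (hdivd t); exact h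
  have hHderiv : ∀ (t : ℝ) (y : 𝒴), HasDerivAt (fun s => H s y) (H1 t y) t :=
    fun t y => (hMcomp t y).pow N
  have hH1eq : ∀ (s : ℝ) (y : 𝒴), H1 s y = M (s / N) y ^ (N - 1) * M1 (s / N) y := by
    intro s y
    simp only [hH1def]
    field_simp
  have hH1deriv : ∀ (t : ℝ) (y : 𝒴), HasDerivAt (fun s => H1 s y) (H2 t y) t := by
    intro t y
    have hg := ((hMcomp t y).pow (N - 1)).mul (hM1comp t y)
    have heq : (fun s => H1 s y) = fun s => M (s / N) y ^ (N - 1) * M1 (s / N) y :=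
      funext fun s => hH1eq s y
    rw [heq]
    exact hg
  have hM2nn : ∀ z y, 0 ≤ M2 z y := fun z y => integral_nonneg fun x => by positivity
  have hH1meas : ∀ t : ℝ, Measurable (H1 t) := fun t =>
    (((hMmeas (t / N)).pow_const (N - 1)).const_mul (N : ℝ)).mul
      ((hM1meas (t / N)).mul_const (1 / N))
  have hH2meas : ∀ t : ℝ, Measurable (H2 t) := fun t =>
    (((((hMmeas (t / N)).pow_const (N - 1 - 1)).const_mul _).mul
      ((hM1meas (t / N)).mul_const _)).mul (hM1meas (t / N))).add
      (((hMmeas (t / N)).pow_const (N - 1)).mul ((hM2meas (t / N)).mul_const _))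
  have houter : ∀ t₀ : ℝ,
      Integrable (H1 t₀) ν ∧ Integrable (H2 t₀) ν ∧
      HasDerivAt (fun t => ∫ y, H t y ∂ν) (∫ y, H1 t₀ y ∂ν) t₀ ∧
      HasDerivAt (fun t => ∫ y, H1 t y ∂ν) (∫ y, H2 t₀ y ∂ν) t₀ ∧
      Integrable (fun y => M (t₀ / N) y ^ (N - 1) * M2 (t₀ / N) y) ν := by
    intro t₀
    set z₀ : ℝ := t₀ / N with hz₀def
    set a : ℝ := z₀ - 4 with hadef
    set b : ℝ := z₀ + 4 with hbdef
    set R : 𝒴 → ℝ := fun y => M a y + M b y with hRdef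
    have hRpos : ∀ y, 0 < R y := fun y => add_pos (hMpos a y) (hMpos b y)
    have hzb : ∀ t ∈ ball t₀ 1, a ≤ t / N - 2 ∧ t / N + 2 ≤ b := by
      intro t ht
      rw [mem_ball, Real.dist_eq] at ht
      have h1 : |t / N - z₀| < 1 := by
        have he : t / N - z₀ = (t - t₀) / N := by rw [hz₀def]; ring
        rw [he, abs_div, abs_of_pos hNR]
        exact lt_of_le_of_lt (div_le_self (abs_nonneg _) (by exact_mod_cast hN)) ht
      rw [abs_lt] at h1
      constructor
      · rw [hadef]; linarith [h1.1]
      · rw [hbdef]; linarith [h1.2]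
    have hMle : ∀ y z, a ≤ z - 2 → z + 2 ≤ b → M z y ≤ R y := by
      intro y z h1 h2
      have h := integral_mono (hmgf z y) ((hmgf a y).add (hmgf b y))
        (fun x => exp_le_add_exp (u := φ y x) (by linarith) (by linarith))
      exact h.trans (le_of_eq (integral_add (hmgf a y) (hmgf b y)))
    have hM1le : ∀ y z, a ≤ z - 2 → z + 2 ≤ b → |M1 z y| ≤ 2 * R y := by
      intro y z h1 h2
      have hsplit : ∫ x, 2 * (Real.exp (a * φ y x) + Real.exp (b * φ y x)) ∂κ y = 2 * R y := by
        rw [MeasureTheory.integral_const_mul, integral_add (hmgf a y) (hmgf b y)]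
      calc |M1 z y| ≤ ∫ x, ‖φ y x * Real.exp (z * φ y x)‖ ∂κ y := by
            rw [← Real.norm_eq_abs]
            exact norm_integral_le_integral_norm _
        _ ≤ ∫ x, 2 * (Real.exp (a * φ y x) + Real.exp (b * φ y x)) ∂κ y :=
            integral_mono (key z y).1.norm (((hmgf a y).add (hmgf b y)).const_mul 2)
              (fun x => by rw [Real.norm_eq_abs]; exact abs_mul_exp_le (u := φ y x) h1 h2)
        _ = 2 * R y := hsplit
    have hM2le : ∀ y z, a ≤ z - 2 → z + 2 ≤ b → M2 z y ≤ 4 * R y := by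
      intro y z h1 h2
      have hsplit : ∫ x, 4 * (Real.exp (a * φ y x) + Real.exp (b * φ y x)) ∂κ y = 4 * R y := by
        rw [MeasureTheory.integral_const_mul, integral_add (hmgf a y) (hmgf b y)]
      calc M2 z y ≤ ∫ x, 4 * (Real.exp (a * φ y x) + Real.exp (b * φ y x)) ∂κ y :=
            integral_mono (key z y).2.1 (((hmgf a y).add (hmgf b y)).const_mul 4)
              (fun x => le_trans (le_abs_self _) (sq_mul_exp_le (u := φ y x) h1 h2))
        _ = 4 * R y := hsplit
    set B : 𝒴 → ℝ := fun y => 8 * R y ^ N with hBdef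
    have hBint : Integrable B ν := by
      have h2 : Integrable (fun y => 8 * (2 ^ N * (M a y ^ N + M b y ^ N))) ν :=
        (((hmgf' a).add (hmgf' b)).const_mul _).const_mul 8
      refine h2.mono' ((((hMmeas a).add (hMmeas b)).pow_const N).const_mul 8).aestronglyMeasurable ?_
      filter_upwards with y
      rw [Real.norm_eq_abs, abs_of_nonneg (by positivity)]
      have hle := pow_add_le_aux (hMpos a y).le (hMpos b y).le N
      exact mul_le_mul_of_nonneg_left hle (by norm_num)
    have hpowR : ∀ y, R y ^ (N - 1) * R y = R y ^ N := by
      intro y; rw [← pow_succ, Nat.sub_add_cancel hN]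
    have hH1bd : ∀ y, ∀ t ∈ ball t₀ 1, ‖H1 t y‖ ≤ B y := by
      intro y t ht
      obtain ⟨h1, h2⟩ := hzb t ht
      rw [hH1eq, Real.norm_eq_abs, abs_mul, abs_of_nonneg (pow_nonneg (hMpos _ y).le _)]
      have hc : M (t / N) y ^ (N - 1) * |M1 (t / N) y| ≤ R y ^ (N - 1) * (2 * R y) := by
        apply mul_le_mul (pow_le_pow_left₀ (hMpos _ y).le (hMle y _ h1 h2) _)
          (hM1le y _ h1 h2) (abs_nonneg _) (by positivity)
      refine hc.trans ?_
      show R y ^ (N - 1) * (2 * R y) ≤ 8 * R y ^ N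
      have h2 : R y ^ (N - 1) * (2 * R y) = 2 * R y ^ N := by rw [← hpowR y]; ring
      rw [h2]
      linarith [pow_pos (hRpos y) N]
    have hH2bd : ∀ y, ∀ t ∈ ball t₀ 1, ‖H2 t y‖ ≤ B y := by
      intro y t ht
      obtain ⟨h1, h2⟩ := hzb t ht
      have hMle' := hMle y _ h1 h2
      have hM1le' := hM1le y _ h1 h2
      have hM2le' := hM2le y _ h1 h2
      have hRp := hRpos y
      have hMp := hMpos (t / N) y
      have hM1abs : (0:ℝ) ≤ |M1 (t / N) y| := abs_nonneg _
      have hterm2 : M (t / N) y ^ (N - 1) * (M2 (t / N) y * (1 / N)) ≤ 4 * R y ^ N := by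
        have hc : M (t / N) y ^ (N - 1) * (M2 (t / N) y * (1 / N))
            ≤ R y ^ (N - 1) * (4 * R y * 1) := by
          apply mul_le_mul (pow_le_pow_left₀ hMp.le hMle' _)
          · apply mul_le_mul hM2le' _ (by positivity) (by positivity)
            rw [div_le_one hNR]; exact_mod_cast hN
          · positivity
          · positivity
        refine hc.trans ?_
        have h2 : R y ^ (N - 1) * (4 * R y * 1) = 4 * R y ^ N := by rw [← hpowR y]; ring
        rw [h2]
      have hterm1 : |((N - 1 : ℕ) : ℝ) * M (t / N) y ^ (N - 1 - 1) * (M1 (t / N) y * (1 / N))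
          * M1 (t / N) y| ≤ 4 * R y ^ N := by
        rcases Nat.lt_or_ge N 2 with hN2 | hN2
        · interval_cases N
          simp only [Nat.sub_self, Nat.cast_zero, zero_mul, abs_zero]
          positivity
        · have hcast : (0:ℝ) ≤ ((N - 1 : ℕ) : ℝ) := by positivity
          have habs : |((N - 1 : ℕ) : ℝ) * M (t / N) y ^ (N - 1 - 1) * (M1 (t / N) y * (1 / N))
              * M1 (t / N) y| = ((N - 1 : ℕ) : ℝ) * M (t / N) y ^ (N - 1 - 1)
              * (|M1 (t / N) y| * (1 / N)) * |M1 (t / N) y| := by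
            rw [abs_mul, abs_mul, abs_mul, abs_mul, Nat.abs_cast,
              abs_of_nonneg (pow_nonneg hMp.le _),
              abs_of_nonneg (show (0:ℝ) ≤ 1 / (N:ℝ) by positivity)]
          rw [habs]
          have hstep : ((N - 1 : ℕ) : ℝ) * M (t / N) y ^ (N - 1 - 1) * (|M1 (t / N) y| * (1 / N))
              * |M1 (t / N) y| ≤ ((N - 1 : ℕ) : ℝ) * R y ^ (N - 2) * (2 * R y * (1 / N))
              * (2 * R y) := by
            have hMpow : M (t / N) y ^ (N - 1 - 1) ≤ R y ^ (N - 2) := by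
              rw [show N - 1 - 1 = N - 2 from rfl]
              exact pow_le_pow_left₀ hMp.le hMle' _
            gcongr
          refine hstep.trans ?_
          have hRN : R y ^ (N - 2) * R y * R y = R y ^ N := by
            rw [← pow_succ, ← pow_succ]
            congr 1
            omega
          have hNle : ((N - 1 : ℕ) : ℝ) ≤ (N : ℝ) := by exact_mod_cast Nat.sub_le N 1
          have hRNpos : 0 < R y ^ N := pow_pos hRp N
          have h4 : ((N - 1 : ℕ) : ℝ) * R y ^ (N - 2) * (2 * R y * (1 / N)) * (2 * R y)
              = 4 * (((N - 1 : ℕ) : ℝ) / N) * (R y ^ (N - 2) * R y * R y) := by ring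
          rw [h4, hRN]
          have : ((N - 1 : ℕ) : ℝ) / N ≤ 1 := by
            rw [div_le_one hNR]; exact hNle
          nlinarith
      calc ‖H2 t y‖ ≤ |((N - 1 : ℕ) : ℝ) * M (t / N) y ^ (N - 1 - 1) * (M1 (t / N) y * (1 / N))
            * M1 (t / N) y| + |M (t / N) y ^ (N - 1) * (M2 (t / N) y * (1 / N))| := by
            rw [Real.norm_eq_abs]; exact abs_add_le _ _
        _ ≤ 4 * R y ^ N + 4 * R y ^ N := by
            refine add_le_add hterm1 ?_
            rw [abs_of_nonneg (by positivity)]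
            exact hterm2
        _ = B y := by rw [hBdef]; ring
    have happ1 := hasDerivAt_integral_of_dominated_loc_of_deriv_le (F := H) (F' := H1)
      (μ := ν) (x₀ := t₀) (bound := B) (ball_mem_nhds t₀ one_pos)
      (Filter.Eventually.of_forall fun t => ((hMmeas (t / N)).pow_const N).aestronglyMeasurable)
      (hmgf' z₀) ((hH1meas t₀).aestronglyMeasurable)
      (Filter.Eventually.of_forall fun y t ht => hH1bd y t ht)
      hBint
      (Filter.Eventually.of_forall fun y t _ => hHderiv t y)
    have happ2 := hasDerivAt_integral_of_dominated_loc_of_deriv_le (F := H1) (F' := H2)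
      (μ := ν) (x₀ := t₀) (bound := B) (ball_mem_nhds t₀ one_pos)
      (Filter.Eventually.of_forall fun t => (hH1meas t).aestronglyMeasurable)
      happ1.1 ((hH2meas t₀).aestronglyMeasurable)
      (Filter.Eventually.of_forall fun y t ht => hH2bd y t ht)
      hBint
      (Filter.Eventually.of_forall fun y t _ => hH1deriv t y)
    have htermA : Integrable (fun y => M z₀ y ^ (N - 1) * M2 z₀ y) ν := by
      refine hBint.mono' (((hMmeas z₀).pow_const (N - 1)).mul (hM2meas z₀)).aestronglyMeasurable ?_
      filter_upwards with y
      have h1 : a ≤ z₀ - 2 := by rw [hadef]; linarith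
      have h2 : z₀ + 2 ≤ b := by rw [hbdef]; linarith
      rw [Real.norm_eq_abs, abs_of_nonneg (mul_nonneg (pow_nonneg (hMpos _ _).le _) (hM2nn _ _))]
      have hc : M z₀ y ^ (N - 1) * M2 z₀ y ≤ R y ^ (N - 1) * (4 * R y) := by
        apply mul_le_mul (pow_le_pow_left₀ (hMpos _ _).le (hMle y _ h1 h2) _)
          (hM2le y _ h1 h2) (hM2nn _ _) (by positivity)
      refine hc.trans ?_
      show R y ^ (N - 1) * (4 * R y) ≤ 8 * R y ^ N
      have h2 : R y ^ (N - 1) * (4 * R y) = 4 * R y ^ N := by rw [← hpowR y]; ring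
      rw [h2]
      linarith [pow_pos (hRpos y) N]
    exact ⟨happ1.1, happ2.1, happ1.2, happ2.2, htermA⟩
  -- general Cauchy-Schwarz fact
  have hDint : ∀ (z : ℝ) (y : 𝒴) (r : ℝ),
      Integrable (fun x => (φ y x - r) ^ 2 * Real.exp (z * φ y x)) (κ y) := by
    intro z y r
    have hrw : (fun x => (φ y x - r) ^ 2 * Real.exp (z * φ y x)) = fun x =>
        (φ y x ^ 2 * Real.exp (z * φ y x)) - (2 * r) * (φ y x * Real.exp (z * φ y x))
        + r ^ 2 * Real.exp (z * φ y x) := funext fun x => by ring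
    rw [hrw]
    exact ((key z y).2.1.sub ((key z y).1.const_mul (2 * r))).add ((hmgf z y).const_mul (r ^ 2))
  have hDval : ∀ (z : ℝ) (y : 𝒴) (r : ℝ),
      ∫ x, (φ y x - r) ^ 2 * Real.exp (z * φ y x) ∂κ y
        = M2 z y - 2 * r * M1 z y + r ^ 2 * M z y := by
    intro z y r
    have hrw : (fun x => (φ y x - r) ^ 2 * Real.exp (z * φ y x)) = fun x =>
        (φ y x ^ 2 * Real.exp (z * φ y x)) - (2 * r) * (φ y x * Real.exp (z * φ y x))
        + r ^ 2 * Real.exp (z * φ y x) := funext fun x => by ring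
    have ia : Integrable (fun x => φ y x ^ 2 * Real.exp (z * φ y x)
        - 2 * r * (φ y x * Real.exp (z * φ y x))) (κ y) :=
      (key z y).2.1.sub ((key z y).1.const_mul (2 * r))
    have ib : Integrable (fun x => r ^ 2 * Real.exp (z * φ y x)) (κ y) :=
      (hmgf z y).const_mul (r ^ 2)
    rw [hrw, integral_add ia ib,
      integral_sub (key z y).2.1 ((key z y).1.const_mul (2 * r)),
      MeasureTheory.integral_const_mul, MeasureTheory.integral_const_mul]
  have hCS : ∀ (z : ℝ) (y : 𝒴), M1 z y ^ 2 ≤ M z y * M2 z y := by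
    intro z y
    have hM := hMpos z y
    set r : ℝ := M1 z y / M z y with hrdef
    have h0 : 0 ≤ ∫ x, (φ y x - r) ^ 2 * Real.exp (z * φ y x) ∂κ y :=
      integral_nonneg fun x => by positivity
    rw [hDval z y r] at h0
    have hrM : r * M z y = M1 z y := by rw [hrdef]; field_simp
    nlinarith [mul_nonneg h0 hM.le, hrM]
  -- the three integral functions
  set G : ℝ → ℝ := fun t => ∫ y, H t y ∂ν with hGdef
  set G1 : ℝ → ℝ := fun t => ∫ y, H1 t y ∂ν with hG1def
  set G2 : ℝ → ℝ := fun t => ∫ y, H2 t y ∂ν with hG2def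
  have hGd : ∀ t, HasDerivAt G (G1 t) t := fun t => (houter t).2.2.1
  have hG1d : ∀ t, HasDerivAt G1 (G2 t) t := fun t => (houter t).2.2.2.1
  have hGpos : ∀ t, 0 < G t := by
    intro t
    have hint : Integrable (H t) ν := hmgf' (t / N)
    rw [hGdef]
    rw [integral_pos_iff_support_of_nonneg_ae
      (Filter.Eventually.of_forall (fun y => (pow_pos (hMpos _ y) N).le)) hint]
    have hsupp : Function.support (H t) = Set.univ :=
      Set.eq_univ_of_forall (fun y => (pow_pos (hMpos _ y) N).ne')
    rw [hsupp]
    simp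
  have hLeq : Λ = fun t => Real.log (G t) := funext fun t => hΛ t
  have hΛd : ∀ t, HasDerivAt Λ (G1 t / G t) t := by
    intro t
    rw [hLeq]
    exact (hGd t).log (hGpos t).ne'
  have hdΛ : deriv Λ = fun t => G1 t / G t := funext fun t => (hΛd t).deriv
  have hΛd2 : ∀ t, HasDerivAt (deriv Λ) ((G2 t * G t - G1 t * G1 t) / (G t) ^ 2) t := by
    intro t
    rw [hdΛ]
    exact (hG1d t).div (hGd t) (hGpos t).ne'
  have hd2 : ∀ t, deriv (deriv Λ) t = (G2 t * G t - G1 t * G1 t) / (G t) ^ 2 :=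
    fun t => (hΛd2 t).deriv
  -- positivity of the numerator
  have hnum : ∀ t : ℝ, 0 < G2 t * G t - G1 t * G1 t := by
    intro t
    set z : ℝ := t / N with hzdef
    set c : ℝ := G1 t / G t with hcdef
    set m : 𝒴 → ℝ := fun y => M1 z y / M z y with hmdef
    have hpowM : ∀ y, M z y ^ (N - 1) * M z y = M z y ^ N := fun y => by
      rw [← pow_succ, Nat.sub_add_cancel hN]
    have hpint : Integrable (fun y => M z y ^ N) ν := hmgf' z
    have htermAint : Integrable (fun y => M z y ^ (N - 1) * M2 z y) ν := (houter t).2.2.2.2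
    have hH1eqm : ∀ y, H1 t y = M z y ^ N * m y := by
      intro y
      rw [hH1eq, ← hzdef, hmdef, ← hpowM y]
      have hM := (hMpos z y).ne'
      field_simp
    have htermCint : Integrable (fun y => M z y ^ N * m y) ν :=
      (houter t).1.congr (Filter.Eventually.of_forall fun y => (hH1eqm y))
    have htermBint : Integrable (fun y => M z y ^ N * (m y) ^ 2) ν := by
      refine htermAint.mono' (((hMmeas z).pow_const N).mul
        (((hM1meas z).div (hMmeas z)).pow_const 2)).aestronglyMeasurable ?_
      filter_upwards with y
      have hM := hMpos z y
      rw [Real.norm_eq_abs, abs_of_nonneg (by positivity)]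
      have hm2 : M z y ^ N * (m y) ^ 2 = M z y ^ (N - 1) * (M1 z y ^ 2 / M z y) := by
        rw [hmdef, ← hpowM y]
        field_simp
      rw [hm2]
      apply mul_le_mul_of_nonneg_left _ (pow_nonneg hM.le _)
      rw [div_le_iff₀ hM]
      nlinarith [hCS z y]
    set D : 𝒴 → ℝ := fun y => ∫ x, (φ y x - m y) ^ 2 * Real.exp (z * φ y x) ∂κ y with hDdef
    have hD0 : ∀ y, 0 ≤ D y := fun y => integral_nonneg fun x => by positivity
    set J : 𝒴 → ℝ := fun y => M z y ^ N * ((1 / (N : ℝ)) * (D y / M z y) + (m y - c) ^ 2)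
      with hJdef
    have hJ0 : ∀ y, 0 ≤ J y := by
      intro y
      have h1 := hD0 y
      have h2 := hMpos z y
      have h3 : 0 ≤ (1 / (N : ℝ)) * (D y / M z y) :=
        mul_nonneg (by positivity) (div_nonneg h1 h2.le)
      have h4 : (0:ℝ) ≤ (m y - c) ^ 2 := sq_nonneg _
      positivity
    have hJeq : ∀ y, J y = (1 / (N : ℝ)) * (M z y ^ (N - 1) * M2 z y)
        - (1 / (N : ℝ)) * (M z y ^ N * (m y) ^ 2) + (M z y ^ N * (m y) ^ 2)
        - 2 * c * (M z y ^ N * m y) + c ^ 2 * (M z y ^ N) := by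
      intro y
      have hM := (hMpos z y).ne'
      rw [hJdef]
      simp only [hDdef]
      rw [hDval z y (m y)]
      rw [hmdef, ← hpowM y]
      field_simp
      ring
    have hJcombo : J = fun y => (1 / (N : ℝ)) * (M z y ^ (N - 1) * M2 z y)
        - (1 / (N : ℝ)) * (M z y ^ N * (m y) ^ 2) + (M z y ^ N * (m y) ^ 2)
        - 2 * c * (M z y ^ N * m y) + c ^ 2 * (M z y ^ N) := funext hJeq
    have i1 := htermAint.const_mul (1 / (N : ℝ))
    have i2 := htermBint.const_mul (1 / (N : ℝ))
    have i3 := htermCint.const_mul (2 * c)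
    have i4 := hpint.const_mul (c ^ 2)
    have hJint : Integrable J ν := by
      rw [hJcombo]
      exact (((i1.sub i2).add htermBint).sub i3).add i4
    have hintJ : ∫ y, J y ∂ν = (1 / (N : ℝ)) * ∫ y, M z y ^ (N - 1) * M2 z y ∂ν
        - (1 / (N : ℝ)) * ∫ y, M z y ^ N * (m y) ^ 2 ∂ν + ∫ y, M z y ^ N * (m y) ^ 2 ∂ν
        - 2 * c * ∫ y, M z y ^ N * m y ∂ν + c ^ 2 * ∫ y, M z y ^ N ∂ν := by
      have e1 : Integrable (fun y => (1 / (N : ℝ)) * (M z y ^ (N - 1) * M2 z y)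
          - (1 / (N : ℝ)) * (M z y ^ N * (m y) ^ 2)) ν := i1.sub i2
      have e2 : Integrable (fun y => (1 / (N : ℝ)) * (M z y ^ (N - 1) * M2 z y)
          - (1 / (N : ℝ)) * (M z y ^ N * (m y) ^ 2) + M z y ^ N * (m y) ^ 2) ν :=
        e1.add htermBint
      have e3 : Integrable (fun y => (1 / (N : ℝ)) * (M z y ^ (N - 1) * M2 z y)
          - (1 / (N : ℝ)) * (M z y ^ N * (m y) ^ 2) + M z y ^ N * (m y) ^ 2
          - 2 * c * (M z y ^ N * m y)) ν := e2.sub i3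
      conv_lhs => rw [hJcombo]
      rw [integral_add e3 i4, integral_sub e2 i3, integral_add e1 htermBint,
        integral_sub i1 i2,
        MeasureTheory.integral_const_mul, MeasureTheory.integral_const_mul,
        MeasureTheory.integral_const_mul, MeasureTheory.integral_const_mul]
    have hG1eq : G1 t = ∫ y, M z y ^ N * m y ∂ν := by
      rw [hG1def]
      exact integral_congr_ae (Filter.Eventually.of_forall fun y => hH1eqm y)
    have hG2eq : G2 t = (1 / (N : ℝ)) * ∫ y, M z y ^ (N - 1) * M2 z y ∂ν
        + (((N : ℝ) - 1) / N) * ∫ y, M z y ^ N * (m y) ^ 2 ∂ν := by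
      rw [hG2def]
      show (∫ y, H2 t y ∂ν) = _
      have hH2eqm : ∀ y, H2 t y = (1 / (N : ℝ)) * (M z y ^ (N - 1) * M2 z y)
          + (((N : ℝ) - 1) / N) * (M z y ^ N * (m y) ^ 2) := by
        intro y
        have hM := (hMpos z y).ne'
        simp only [hH2def]
        rcases Nat.lt_or_ge N 2 with h2 | h2
        · interval_cases N
          rw [hzdef]
          norm_num
        · have hc2 : ((N - 1 : ℕ) : ℝ) = (N : ℝ) - 1 := by
            push_cast [Nat.cast_sub hN]
            ring
          have hpA : M z y ^ (N - 1) = M z y ^ (N - 2) * M z y := by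
            rw [← pow_succ]
            congr 1
            omega
          have hpB : M z y ^ N = M z y ^ (N - 2) * M z y * M z y := by
            rw [← pow_succ, ← pow_succ]
            congr 1
            omega
          have hn11 : N - 1 - 1 = N - 2 := by omega
          rw [hn11, hc2, hmdef, hpA, hpB]
          field_simp
          ring
      rw [integral_congr_ae (Filter.Eventually.of_forall hH2eqm),
        integral_add (htermAint.const_mul (1 / (N : ℝ)))
          (htermBint.const_mul (((N : ℝ) - 1) / N)),
        MeasureTheory.integral_const_mul, MeasureTheory.integral_const_mul]
    have hGeq : G t = ∫ y, M z y ^ N ∂ν := rfl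
    have hJpos : 0 < ∫ y, J y ∂ν := by
      rcases lt_or_eq_of_le (integral_nonneg (f := J) hJ0) with h | h
      · exact h
      exfalso
      apply hnondeg
      refine ⟨c, ?_⟩
      have hJae : J =ᵐ[ν] 0 := (integral_eq_zero_iff_of_nonneg (fun y => hJ0 y) hJint).mp h.symm
      have hae1 : ∀ᵐ y ∂ν, ∀ᵐ x ∂κ y, φ y x = c := by
        filter_upwards [hJae] with y hy
        have hM := hMpos z y
        have hpN : 0 < M z y ^ N := pow_pos hM N
        have hyJ : J y = 0 := hy
        rw [hJdef] at hyJ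
        have hS : (1 / (N : ℝ)) * (D y / M z y) + (m y - c) ^ 2 = 0 :=
          (mul_eq_zero.mp hyJ).resolve_left hpN.ne'
        have h1 : 0 ≤ (1 / (N : ℝ)) * (D y / M z y) :=
          mul_nonneg (by positivity) (div_nonneg (hD0 y) hM.le)
        have h2 : (0:ℝ) ≤ (m y - c) ^ 2 := sq_nonneg _
        have h3 : (1 / (N : ℝ)) * (D y / M z y) = 0 := by linarith
        have h4 : (m y - c) ^ 2 = 0 := by linarith
        have hmc : m y = c := by
          have := sq_eq_zero_iff.mp h4
          linarith [this]
        have hDy : D y = 0 := by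
          have hd : D y / M z y = 0 := by
            rcases mul_eq_zero.mp h3 with h | h
            · exact absurd h (by positivity)
            · exact h
          exact (div_eq_zero_iff.mp hd).resolve_right hM.ne'
        have hDz := (integral_eq_zero_iff_of_nonneg
          (fun x => by positivity) (hDint z y (m y))).mp hDy
        filter_upwards [hDz] with x hx
        have hexp := (Real.exp_pos (z * φ y x)).ne'
        have hsq : (φ y x - m y) ^ 2 = 0 := by
          rcases mul_eq_zero.mp hx with h | h
          · exact h
          · exact absurd h hexp
        have := sq_eq_zero_iff.mp hsq
        have : φ y x = m y := by linarith
        rw [this, hmc]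
      exact Measure.ae_compProd_of_ae_ae (hφ (measurableSet_singleton c)) hae1
    have hkey : G2 t * G t - G1 t * G1 t = G t * ∫ y, J y ∂ν := by
      have hPpos : 0 < ∫ y, M z y ^ N ∂ν := by rw [← hGeq]; exact hGpos t
      rw [hintJ, hG2eq, hG1eq, hcdef, hG1eq, hGeq]
      field_simp
      ring
    rw [hkey]
    exact mul_pos (hGpos t) hJpos
  -- values at 0
  have hz0 : (0 : ℝ) / N = 0 := zero_div _
  have hM0 : ∀ y, M 0 y = 1 := by
    intro y
    rw [hMdef]
    simp [measure_univ]
  have hM10 : ∀ y, M1 0 y = ∫ x, φ y x ∂κ y := by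
    intro y
    rw [hM1def]
    simp
  have hM20 : ∀ y, M2 0 y = ∫ x, (φ y x) ^ 2 ∂κ y := by
    intro y
    rw [hM2def]
    simp
  have hG0 : G 0 = 1 := by
    rw [hGdef]
    show (∫ y, H 0 y ∂ν) = 1
    have hH0 : ∀ y, H 0 y = 1 := by
      intro y
      simp only [hHdef]
      rw [hz0, hM0 y, one_pow]
    rw [integral_congr_ae (Filter.Eventually.of_forall hH0)]
    simp [measure_univ]
  have hG1zero : G1 0 = ∫ y, ∫ x, φ y x ∂κ y ∂ν := by
    rw [hG1def]
    show (∫ y, H1 0 y ∂ν) = _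
    refine integral_congr_ae (Filter.Eventually.of_forall fun y => ?_)
    rw [hH1eq, hz0, hM0 y, hM10 y, one_pow, one_mul]
  have hpart2 : deriv Λ 0 = ∫ p, φ p.1 p.2 ∂(ν ⊗ₘ κ) := by
    rw [hdΛ]
    show G1 0 / G 0 = _
    rw [hG0, hG1zero, div_one, MeasureTheory.Measure.integral_compProd hφint]
  -- integrability for part 3
  have hmeasm : Measurable (fun y => ∫ x, φ y x ∂κ y) :=
    (MeasureTheory.StronglyMeasurable.integral_kernel_prod_right (κ := κ)
      (f := fun y x => φ y x) hφ.stronglyMeasurable).measurable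
  have hsint : Integrable (fun y => ∫ x, (φ y x) ^ 2 ∂κ y) ν := by
    have h := hmom 0
    simp only [zero_mul, Real.exp_zero, mul_one] at h
    have h2 := (Measure.integrable_compProd_iff
      ((hφ.pow_const 2).comp measurable_id).aestronglyMeasurable).mp h
    refine h2.2.congr (Filter.Eventually.of_forall fun y => ?_)
    refine integral_congr_ae (Filter.Eventually.of_forall fun x => ?_)
    exact Real.norm_of_nonneg (sq_nonneg _)
  have hm2int : Integrable (fun y => (∫ x, φ y x ∂κ y) ^ 2) ν := by
    refine hsint.mono' (hmeasm.pow_const 2).aestronglyMeasurable ?_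
    filter_upwards with y
    rw [Real.norm_eq_abs, abs_of_nonneg (sq_nonneg _)]
    have h := hCS 0 y
    rw [hM0 y, hM10 y, hM20 y, one_mul] at h
    exact h
  have hG2zero : G2 0 = (((N : ℝ) - 1) / N) * ∫ y, (∫ x, φ y x ∂κ y) ^ 2 ∂ν
      + (1 / (N : ℝ)) * ∫ y, ∫ x, (φ y x) ^ 2 ∂κ y ∂ν := by
    rw [hG2def]
    show (∫ y, H2 0 y ∂ν) = _
    have hc2 : ((N - 1 : ℕ) : ℝ) = (N : ℝ) - 1 := by
      push_cast [Nat.cast_sub hN]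
      ring
    have hH20 : ∀ y, H2 0 y = (((N : ℝ) - 1) / N) * (∫ x, φ y x ∂κ y) ^ 2
        + (1 / (N : ℝ)) * ∫ x, (φ y x) ^ 2 ∂κ y := by
      intro y
      simp only [hH2def]
      rw [hz0, hM0 y, hM10 y, hM20 y, hc2]
      ring
    rw [integral_congr_ae (Filter.Eventually.of_forall hH20),
      integral_add (hm2int.const_mul (((N : ℝ) - 1) / N)) (hsint.const_mul (1 / (N : ℝ))),
      MeasureTheory.integral_const_mul, MeasureTheory.integral_const_mul]
  have hpart3 : deriv (deriv Λ) 0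
      = (1 / N : ℝ) * (∫ y, ((∫ x, (φ y x) ^ 2 ∂(κ y)) - (∫ x, φ y x ∂(κ y)) ^ 2) ∂ν)
        + ((∫ y, (∫ x, φ y x ∂(κ y)) ^ 2 ∂ν) - (∫ y, ∫ x, φ y x ∂(κ y) ∂ν) ^ 2) := by
    rw [hd2 0, hG0, hG2zero, hG1zero]
    rw [integral_sub hsint hm2int]
    field_simp
    ring
  refine ⟨?_, hpart2, hpart3⟩
  apply strictConvexOn_of_deriv2_pos convex_univ
  · intro x _
    exact ((hΛd x).differentiableAt.continuousAt).continuousWithinAt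
  · intro x _
    have hit : deriv^[2] Λ = deriv (deriv Λ) := by
      rw [show (2:ℕ) = 1 + 1 from rfl, Function.iterate_add_apply, Function.iterate_one]
    rw [hit, hd2 x]
    exact div_pos (hnum x) (pow_pos (hGpos x) 2)
end

section
/- Suppose Γ(X,Y) is a random variable satisfying the conditional sub-Gaussian bound E[exp(tΓ)|Y] ≤ exp(t·E[Γ|Y] + b₁²t²/2) a.s. and the sub-Gaussian bound E[exp(t·E[Γ|Y])] ≤ exp(t·E[Γ] + b₂²t²/2), for all t ∈ ℝ. Then log E[ (E[exp((t/N)Γ)|Y])^N ] ≤ t·E[Γ] + (1/2)(b₁²/N + b₂²)t² for all t ∈ ℝ. -/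
open MeasureTheory

lemma condexp_jensen_exp {Ω : Type*} {m0 : MeasurableSpace Ω} (μ : Measure Ω)
    [IsProbabilityMeasure μ] {m : MeasurableSpace Ω} (hle : m ≤ m0)
    (Γ : Ω → ℝ) (hΓint : Integrable Γ μ) (t : ℝ)
    (hexp : Integrable (fun ω => Real.exp (t * Γ ω)) μ) :
    ∀ᵐ ω ∂μ, Real.exp (t * condExp m μ Γ ω)
      ≤ condExp m μ (fun ω => Real.exp (t * Γ ω)) ω := by
  set a := condExp m μ Γ with ha
  have ha_sm : StronglyMeasurable[m] a := stronglyMeasurable_condExp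
  set aK : ℕ → Ω → ℝ := fun K ω => max (min (a ω) K) (-(K : ℝ)) with haK
  have haK_sm : ∀ K : ℕ, StronglyMeasurable[m] (aK K) := fun K =>
    ((ha_sm.measurable.min measurable_const).max measurable_const).stronglyMeasurable
  have haK_bdd : ∀ K : ℕ, ∀ ω, |aK K ω| ≤ (K : ℝ) := by
    intro K ω
    rw [abs_le]
    constructor
    · exact le_max_right _ _
    · exact max_le (min_le_right _ _) (by have : (0:ℝ) ≤ (K:ℝ) := Nat.cast_nonneg K; linarith)
  have haK_int : ∀ K : ℕ, Integrable (aK K) μ := by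
    intro K
    refine Integrable.mono (integrable_const (K : ℝ)) 
      ((haK_sm K).mono hle).aestronglyMeasurable ?_
    filter_upwards with ω
    calc ‖aK K ω‖ = |aK K ω| := Real.norm_eq_abs _
      _ ≤ (K : ℝ) := haK_bdd K ω
      _ = ‖(K : ℝ)‖ := by simp
  have key : ∀ K : ℕ, ∀ᵐ ω ∂μ,
      Real.exp (t * aK K ω) * (1 + (t * a ω - t * aK K ω))
        ≤ condExp m μ (fun ω => Real.exp (t * Γ ω)) ω := by
    intro K
    set f : Ω → ℝ := fun ω => Real.exp (t * aK K ω) with hf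
    have hf_sm : StronglyMeasurable[m] f :=
      Real.continuous_exp.comp_stronglyMeasurable (stronglyMeasurable_const.mul (haK_sm K))
    have hf_bdd : ∀ᵐ ω ∂μ, ‖f ω‖ ≤ Real.exp (|t| * K) := by
      filter_upwards with ω
      rw [Real.norm_eq_abs, abs_of_pos (Real.exp_pos _), Real.exp_le_exp]
      calc t * aK K ω ≤ |t * aK K ω| := le_abs_self _
        _ = |t| * |aK K ω| := abs_mul _ _
        _ ≤ |t| * K := by have := haK_bdd K ω; nlinarith [abs_nonneg t]
    set g : Ω → ℝ := fun ω => 1 + (t * Γ ω - t * aK K ω) with hg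
    have hsub_int : Integrable (fun ω => t * Γ ω - t * aK K ω) μ :=
      (hΓint.const_mul t).sub ((haK_int K).const_mul t)
    have hg_int : Integrable g μ := (integrable_const 1).add hsub_int
    -- pointwise tangent inequality
    have hpt : ∀ ω, f ω * g ω ≤ Real.exp (t * Γ ω) := by
      intro ω
      have h1 : (t * Γ ω - t * aK K ω) + 1 ≤ Real.exp (t * Γ ω - t * aK K ω) :=
        Real.add_one_le_exp _
      calc f ω * g ω = Real.exp (t * aK K ω) * ((t * Γ ω - t * aK K ω) + 1) := by
            simp [hf, hg]; ring
        _ ≤ Real.exp (t * aK K ω) * Real.exp (t * Γ ω - t * aK K ω) := by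
            exact mul_le_mul_of_nonneg_left h1 (Real.exp_pos _).le
        _ = Real.exp (t * Γ ω) := by rw [← Real.exp_add]; ring_nf
    have hfg_int : Integrable (fun ω => f ω * g ω) μ :=
      hg_int.bdd_mul ((hf_sm.mono hle).aestronglyMeasurable) hf_bdd
    have hmono := condExp_mono (μ := μ) (m := m) hfg_int hexp
      (Filter.Eventually.of_forall hpt)
    have hpull : condExp m μ (f * g) =ᵐ[μ] f * condExp m μ g :=
      condExp_stronglyMeasurable_mul_of_bound hle hf_sm hg_int _ hf_bdd
    have hcg : condExp m μ g =ᵐ[μ] fun ω => 1 + (t * a ω - t * aK K ω) := by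
      have h1 : condExp m μ g =ᵐ[μ]
          condExp m μ (fun _ => (1 : ℝ)) + condExp m μ (fun ω => t * Γ ω - t * aK K ω) :=
        condExp_add (integrable_const 1) hsub_int m
      have h2 : condExp m μ (fun ω => t * Γ ω - t * aK K ω) =ᵐ[μ]
          fun ω => t * a ω - t * aK K ω := by
        have hs : (fun ω => t * Γ ω - t * aK K ω) = t • (Γ - aK K) := by
          funext ω; simp [smul_eq_mul]; ring
        rw [hs]
        refine (condExp_smul t (Γ - aK K) m).trans ?_
        have h3 : condExp m μ (Γ - aK K) =ᵐ[μ] condExp m μ Γ - condExp m μ (aK K) :=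
          condExp_sub hΓint (haK_int K) m
        have h4 : condExp m μ (aK K) = aK K :=
          condExp_of_stronglyMeasurable hle (haK_sm K) (haK_int K)
        filter_upwards [h3] with ω h3
        simp only [Pi.smul_apply, smul_eq_mul, h3, Pi.sub_apply, h4]
        ring
      refine h1.trans ?_
      filter_upwards [h2] with ω h2
      simp [condExp_const hle, h2]
    filter_upwards [hmono, hpull, hcg] with ω hmono hpull hcg
    have : condExp m μ (f * g) ω = f ω * (1 + (t * a ω - t * aK K ω)) := by
      rw [hpull, Pi.mul_apply, hcg]
    calc Real.exp (t * aK K ω) * (1 + (t * a ω - t * aK K ω))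
        = condExp m μ (f * g) ω := this.symm
      _ = condExp m μ (fun ω => f ω * g ω) ω := rfl
      _ ≤ _ := hmono
  have hall := ae_all_iff.mpr key
  filter_upwards [hall] with ω hω
  set K : ℕ := ⌈|a ω|⌉₊ with hK
  have hKa : |a ω| ≤ (K : ℝ) := Nat.le_ceil _
  have haKeq : aK K ω = a ω := by
    rw [abs_le] at hKa
    simp only [haK]
    rw [min_eq_left hKa.2, max_eq_left hKa.1]
  have := hω K
  rwa [haKeq, sub_self, add_zero, mul_one] at this

/-- if `Γ` satisfies the conditional sub-Gaussian bound given `Y` with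
constant `b₁` and the sub-Gaussian bound for `E[Γ|Y]` with constant `b₂`, then
`log E[(E[exp((t/N)Γ)|Y])^N] ≤ t·E[Γ] + (1/2)(b₁²/N + b₂²)t²` for all `t`. -/
theorem subgaussian_hierarchical_mgf_bound
    {Ω : Type*} [MeasurableSpace Ω] (μ : Measure Ω) [IsProbabilityMeasure μ]
    {𝒴 : Type*} [MeasurableSpace 𝒴] (Y : Ω → 𝒴) (hY : Measurable Y)
    (Γ : Ω → ℝ) (hΓmeas : Measurable Γ) (hΓint : Integrable Γ μ)
    (hexpint : ∀ t : ℝ, Integrable (fun ω => Real.exp (t * Γ ω)) μ)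
    (b₁ b₂ : ℝ) (hb₁ : 0 < b₁) (hb₂ : 0 < b₂) (N : ℕ) (hN : 1 ≤ N)
    (m : MeasurableSpace Ω) (hm : m = MeasurableSpace.comap Y inferInstance)
    (hsub1 : ∀ t : ℝ, ∀ᵐ ω ∂μ,
      condExp m μ (fun ω' => Real.exp (t * Γ ω')) ω
        ≤ Real.exp (t * condExp m μ Γ ω + b₁ ^ 2 * t ^ 2 / 2))
    (hsub2 : ∀ t : ℝ,
      ∫ ω, Real.exp (t * condExp m μ Γ ω) ∂μ
        ≤ Real.exp (t * ∫ ω, Γ ω ∂μ + b₂ ^ 2 * t ^ 2 / 2)) :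
    ∀ t : ℝ,
      Real.log (∫ ω, (condExp m μ (fun ω' => Real.exp ((t / N) * Γ ω')) ω) ^ N ∂μ)
        ≤ t * (∫ ω, Γ ω ∂μ) + (1 / 2) * (b₁ ^ 2 / N + b₂ ^ 2) * t ^ 2 := by
  intro t
  have hle := hm ▸ hY.comap_le
  have hNpos : (0 : ℝ) < N := by exact_mod_cast Nat.lt_of_lt_of_le Nat.zero_lt_one hN
  have hNne : (N : ℝ) ≠ 0 := ne_of_gt hNpos
  set s := t / (N : ℝ) with hs
  set a := condExp m μ Γ with ha
  set f := condExp m μ (fun ω' => Real.exp (s * Γ ω')) with hf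
  set g : Ω → ℝ := fun ω => Real.exp (t * a ω) with hg
  have hf_nonneg : 0 ≤ᵐ[μ] f :=
    condExp_nonneg (Filter.Eventually.of_forall fun ω => (Real.exp_pos _).le)
  have hjensen := condexp_jensen_exp μ hle Γ hΓint t (hexpint t)
  have ha_aem : AEMeasurable a μ :=
    (stronglyMeasurable_condExp.mono hle).aestronglyMeasurable.aemeasurable
  have hgmeas := (Real.measurable_exp.comp_aemeasurable (ha_aem.const_mul t)).aestronglyMeasurable
  have hgint : Integrable g μ := by
    refine Integrable.mono
      (integrable_condExp (m := m) (f := fun ω => Real.exp (t * Γ ω)) (μ := μ)) hgmeas ?_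
    filter_upwards [hjensen] with ω hω
    rw [Real.norm_eq_abs, Real.norm_eq_abs, abs_of_pos (Real.exp_pos _)]
    exact hω.trans (le_abs_self _)
  have hcomp : ∀ᵐ ω ∂μ, f ω ^ N ≤ Real.exp (b₁ ^ 2 * t ^ 2 / (2 * N)) * g ω := by
    filter_upwards [hsub1 s, hf_nonneg] with ω h1 h0
    calc f ω ^ N ≤ (Real.exp (s * a ω + b₁ ^ 2 * s ^ 2 / 2)) ^ N :=
          pow_le_pow_left₀ h0 h1 N
      _ = Real.exp ((N : ℝ) * (s * a ω + b₁ ^ 2 * s ^ 2 / 2)) := by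
          rw [Real.exp_nat_mul]
      _ = Real.exp (b₁ ^ 2 * t ^ 2 / (2 * N)) * g ω := by
          rw [hg, ← Real.exp_add]
          congr 1
          rw [hs]
          field_simp
          ring
  have hf_aem : AEMeasurable f μ :=
    (stronglyMeasurable_condExp.mono hle).aestronglyMeasurable.aemeasurable
  have hfmeas :=
    (hf_aem.pow_const N).aestronglyMeasurable
  have hfN_int : Integrable (fun ω => f ω ^ N) μ := by
    refine Integrable.mono' (hgint.const_mul (Real.exp (b₁ ^ 2 * t ^ 2 / (2 * N)))) hfmeas ?_
    filter_upwards [hcomp, hf_nonneg] with ω h h0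
    rw [Real.norm_eq_abs, abs_of_nonneg (pow_nonneg h0 N)]
    exact h
  have hIpos : 0 < ∫ ω, f ω ^ N ∂μ := by
    rw [integral_pos_iff_support_of_nonneg_ae
      (hf_nonneg.mono fun ω h => pow_nonneg h N) hfN_int]
    have h1 : 0 < ∫ ω, f ω ∂μ := by
      rw [hf, integral_condExp hle]
      exact integral_exp_pos (hexpint s)
    rw [integral_pos_iff_support_of_nonneg_ae hf_nonneg integrable_condExp] at h1
    refine h1.trans_le (measure_mono ?_)
    intro ω h
    exact pow_ne_zero N h
  have hmain : ∫ ω, f ω ^ N ∂μ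
      ≤ Real.exp (b₁ ^ 2 * t ^ 2 / (2 * N))
        * Real.exp (t * ∫ ω, Γ ω ∂μ + b₂ ^ 2 * t ^ 2 / 2) := by
    calc ∫ ω, f ω ^ N ∂μ
        ≤ ∫ ω, Real.exp (b₁ ^ 2 * t ^ 2 / (2 * N)) * g ω ∂μ :=
          integral_mono_ae hfN_int (hgint.const_mul _) hcomp
      _ = Real.exp (b₁ ^ 2 * t ^ 2 / (2 * N)) * ∫ ω, g ω ∂μ := by
          rw [integral_const_mul]
      _ ≤ _ := mul_le_mul_of_nonneg_left (hsub2 t) (Real.exp_pos _).le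
  rw [Real.log_le_iff_le_exp hIpos]
  refine hmain.trans_eq ?_
  rw [← Real.exp_add]
  congr 1
  field_simp
  ring
end

section
/- Covering-net reduction lemma: Let Θ be compact with diameter D, G and Ĝ both L'-Lipschitz on Θ (Ĝ being L̂-Lipschitz with L̂ ≤ L'), let Θ' be a ϱ-net of Θ and Θ̃ = Θ' ∪ {θ⋆} with θ⋆ a minimizer of G over Θ. If ϱ < (ε−δ)/(2L'), δ' = δ + L'ϱ, ε' = ε − L'ϱ, then {Ŝ^δ ⊄ S^ε} ∩ {L̂ ≤ L'} ⊆ {Ŝ^{δ'}(Θ̃) ⊄ S^{ε'}(Θ̃)}, where S^ε(A) = {θ∈A: G(θ) ≤ min_A G + ε} and Ŝ^δ(A) analogously for Ĝ. -/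
/-- covering-net reduction lemma. If `G` is `L'`-Lipschitz and `Ĝ` is
`L̂`-Lipschitz (`L̂ ≤ L'`) on a compact set `Θ`, `Θ'` is a `ϱ`-net of `Θ`,
`Θ̃ = Θ' ∪ {θ⋆}` with `θ⋆` a minimizer of `G` over `Θ`, and `ϱ < (ε−δ)/(2L')`,
`δ' = δ + L'ϱ`, `ε' = ε − L'ϱ`, then
`{Ŝ^δ ⊄ S^ε} ∩ {L̂ ≤ L'} ⊆ {Ŝ^{δ'}(Θ̃) ⊄ S^{ε'}(Θ̃)}`. -/
theorem covering_net_reduction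
    {V : Type*} [NormedAddCommGroup V] [NormedSpace ℝ V]
    (Θset : Set V) (hcompact : IsCompact Θset) (hne : Θset.Nonempty)
    (D : ℝ) (hD : D = Metric.diam Θset)
    (G Ghat : V → ℝ) (Lhat L' : ℝ) (hL' : 0 < L') (hLhat : Lhat ≤ L')
    (hGLip : ∀ θ ∈ Θset, ∀ θ' ∈ Θset, |G θ - G θ'| ≤ L' * ‖θ - θ'‖)
    (hGhatLip : ∀ θ ∈ Θset, ∀ θ' ∈ Θset, |Ghat θ - Ghat θ'| ≤ Lhat * ‖θ - θ'‖)
    (θs : V) (hθs : θs ∈ Θset) (hθsmin : ∀ θ ∈ Θset, G θs ≤ G θ)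
    (Θ' : Set V) (hΘ' : Θ' ⊆ Θset)
    (ϱ : ℝ) (hϱpos : 0 < ϱ) (hnet : ∀ θ ∈ Θset, ∃ θ' ∈ Θ', ‖θ - θ'‖ < ϱ)
    (ε δ δ' ε' : ℝ) (hδ : 0 < δ) (hδε : δ < ε)
    (hϱ : ϱ < (ε - δ) / (2 * L')) (hδ' : δ' = δ + L' * ϱ) (hε' : ε' = ε - L' * ϱ) :
    (∃ θ ∈ Θset, Ghat θ ≤ sInf (Ghat '' Θset) + δ ∧ G θ > sInf (G '' Θset) + ε) →
      ∃ θ' ∈ insert θs Θ',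
        Ghat θ' ≤ sInf (Ghat '' insert θs Θ') + δ'
          ∧ G θ' > sInf (G '' insert θs Θ') + ε' := by
  rintro ⟨θ, hθ, hGhatθ, hGθ⟩
  obtain ⟨θ', hθ'Θ', hclose⟩ := hnet θ hθ
  have hθ'Θ : θ' ∈ Θset := hΘ' hθ'Θ'
  have hsub : insert θs Θ' ⊆ Θset := Set.insert_subset hθs hΘ'
  -- bound Lhat * ‖θ - θ'‖ ≤ L' * ϱ
  have hnorm : L' * ‖θ - θ'‖ ≤ L' * ϱ := by
    exact mul_le_mul_of_nonneg_left hclose.le hL'.le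
  have hLn : Lhat * ‖θ - θ'‖ ≤ L' * ϱ :=
    le_trans (mul_le_mul_of_nonneg_right hLhat (norm_nonneg _)) hnorm
  -- bddBelow of Ghat '' Θset
  have hbdd : BddBelow (Ghat '' Θset) := by
    refine ⟨Ghat θs - L' * D, ?_⟩
    rintro y ⟨x, hx, rfl⟩
    have h1 := hGhatLip θs hθs x hx
    have h2 : ‖θs - x‖ ≤ D := by
      rw [hD, ← dist_eq_norm]
      exact Metric.dist_le_diam_of_mem hcompact.isBounded hθs hx
    have h3 : Lhat * ‖θs - x‖ ≤ L' * D := by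
      calc Lhat * ‖θs - x‖ ≤ L' * ‖θs - x‖ :=
            mul_le_mul_of_nonneg_right hLhat (norm_nonneg _)
        _ ≤ L' * D := mul_le_mul_of_nonneg_left h2 hL'.le
    have := (abs_le.mp h1).2
    linarith
  have hGsInf : sInf (G '' Θset) = G θs := by
    apply le_antisymm
    · exact csInf_le ⟨G θs, by rintro y ⟨x, hx, rfl⟩; exact hθsmin x hx⟩ ⟨θs, hθs, rfl⟩
    · exact le_csInf ⟨G θ, θ, hθ, rfl⟩ (by rintro y ⟨x, hx, rfl⟩; exact hθsmin x hx)
  have hGsInf' : sInf (G '' insert θs Θ') = G θs := by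
    apply le_antisymm
    · exact csInf_le ⟨G θs, by rintro y ⟨x, hx, rfl⟩; exact hθsmin x (hsub hx)⟩
        ⟨θs, Set.mem_insert _ _, rfl⟩
    · exact le_csInf ⟨G θs, θs, Set.mem_insert _ _, rfl⟩
        (by rintro y ⟨x, hx, rfl⟩; exact hθsmin x (hsub hx))
  have hGhatmono : sInf (Ghat '' Θset) ≤ sInf (Ghat '' insert θs Θ') :=
    csInf_le_csInf hbdd ⟨Ghat θs, θs, Set.mem_insert _ _, rfl⟩
      (Set.image_mono hsub)
  refine ⟨θ', Set.mem_insert_of_mem _ hθ'Θ', ?_, ?_⟩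
  · have h1 := (abs_le.mp (hGhatLip θ hθ θ' hθ'Θ)).1
    have : Ghat θ' ≤ Ghat θ + L' * ϱ := by linarith
    calc Ghat θ' ≤ Ghat θ + L' * ϱ := this
      _ ≤ sInf (Ghat '' Θset) + δ + L' * ϱ := by linarith
      _ ≤ sInf (Ghat '' insert θs Θ') + δ' := by rw [hδ']; linarith
  · have h1 := (abs_le.mp (hGLip θ hθ θ' hθ'Θ)).2
    rw [hGsInf'] ; rw [hGsInf] at hGθ
    have : G θ' ≥ G θ - L' * ϱ := by linarith
    rw [hε']; linarith
end
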